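/- Truncation-cut comparison lemma (core of the continuity proofs): let Ω = Ω⁺ ∪ γ ∪ Ω⁻ be a decomposition of Ω by a set γ of finite H^{N−1}-measure with Ω± open, and let u ∈ BV(Ω) have one-sided traces u⁺, u⁻ on γ with |u⁺ − (t+s)/2| < |u⁺ − u⁻| H^{N−1}-a.e. on a subset of γ of positive measure and |u⁺ − (t+s)/2| ≤ |u⁺ − u⁻| a.e. on γ. If u is not constant ≡ (t+s)/2 on Ω⁻, then the function v equal to u on Ω⁺ and to (t+s)/2 on Ω⁻ satisfies ∫_Ω |Dv|_φ < ∫_Ω |Du|_φ. -/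

import Mathlib

open Set MeasureTheory
open scoped Classical

/-- Truncation-cut comparison lemma (core of the continuity proofs).
`Ω = Ω⁺ ∪ γ ∪ Ω⁻`, `σ` is the `H^{N−1}` surface measure on the interface `γ`,
`u⁺, u⁻` are the one-sided traces of `u` on `γ`, `w x = φ(x,ν^γ(x)) ≥ λ > 0`, and
`v` is obtained from `u` by replacing it with the constant `(t+s)/2` on `Ω⁻`.
Under the hypotheses `|u⁺ − (t+s)/2| ≤ |u⁺ − u⁻|` a.e. on `γ`, with strict
inequality on a set of positive measure, the jump formulas give
`∫_Ω |Dv|_φ < ∫_Ω |Du|_φ`. -/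
theorem truncation_cut_comparison {N : ℕ}
    (Ω Ωp Ωm γ : Set (EuclideanSpace ℝ (Fin N)))
    (hΩo : IsOpen Ω) (hΩb : Bornology.IsBounded Ω)
    (hOp : IsOpen Ωp) (hOm : IsOpen Ωm)
    (hdecomp : Ω = Ωp ∪ γ ∪ Ωm) (hd1 : Disjoint Ωp Ωm) (hd2 : Disjoint Ωp γ)
    (hd3 : Disjoint Ωm γ)
    -- the surface measure on the interface γ, of finite total mass
    (σ : Measure (EuclideanSpace ℝ (Fin N))) [IsFiniteMeasure σ] (hσγ : σ γᶜ = 0)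
    (hσ : σ = (μH[(N : ℝ) - 1]).restrict γ)
    -- anisotropic weight w x = φ(x, ν^γ(x)), bounded below by the ellipticity
    -- constant λ of the metric integrand
    (w : EuclideanSpace ℝ (Fin N) → ℝ)
    (lam : ℝ) (hlam : 0 < lam) (hw : ∀ᵐ x ∂σ, lam ≤ w x)
    -- t < s and the one-sided traces u⁺, u⁻ of u on γ, with u⁻ ≤ t < s ≤ u⁺
    (t s : ℝ) (hts : t < s)
    (up um : EuclideanSpace ℝ (Fin N) → ℝ)
    (hside : ∀ᵐ x ∂σ, um x ≤ t ∧ s ≤ up x)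
    -- the function u and the comparison function v
    (u v : EuclideanSpace ℝ (Fin N) → ℝ)
    (hv : v = fun x => if x ∈ Ωm then (t + s) / 2 else u x)
    -- the total variations over Ω, Ω⁺, Ω⁻ and the jump formulas
    (TVu TVv TVp TVm : ℝ) (hTVp : 0 ≤ TVp) (hTVm : 0 ≤ TVm)
    (hintu : Integrable (fun x => w x * |up x - um x|) σ)
    (hintv : Integrable (fun x => w x * |up x - (t + s) / 2|) σ)
    (hjumpu : TVu = TVp + (∫ x, w x * |up x - um x| ∂σ) + TVm)
    (hjumpv : TVv = TVp + ∫ x, w x * |up x - (t + s) / 2| ∂σ)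
    -- the comparison hypotheses
    (hae : ∀ᵐ x ∂σ, |up x - (t + s) / 2| ≤ |up x - um x|)
    (hstrict : σ {x | |up x - (t + s) / 2| < |up x - um x|} ≠ 0)
    -- u is not identically (t+s)/2 on Ω⁻
    (hnotconst : ¬ ∀ x ∈ Ωm, u x = (t + s) / 2) :
    TVv < TVu := by

  set f : EuclideanSpace ℝ (Fin N) → ℝ := fun x => w x * |up x - (t + s) / 2| with hf
  set g : EuclideanSpace ℝ (Fin N) → ℝ := fun x => w x * |up x - um x| with hg
  have hint : Integrable (fun x => g x - f x) σ := hintu.sub hintv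
  have hnn : 0 ≤ᵐ[σ] fun x => g x - f x := by
    filter_upwards [hw, hae] with x hwx haex
    have h0 : 0 ≤ w x := le_trans hlam.le hwx
    simp only [Pi.zero_apply, hf, hg, sub_nonneg]
    exact mul_le_mul_of_nonneg_left haex h0
  have hsupp : 0 < σ (Function.support fun x => g x - f x) := by
    set A := {x | |up x - (t + s) / 2| < |up x - um x|}
    set B := {x | lam ≤ w x}
    have hBc : σ Bᶜ = 0 := by
      have := ae_iff.1 hw
      simpa [B, compl_setOf] using this
    have hsub : A ∩ B ⊆ Function.support fun x => g x - f x := by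
      intro x ⟨hxA, hxB⟩
      have hwx : 0 < w x := lt_of_lt_of_le hlam hxB
      have : f x < g x := mul_lt_mul_of_pos_left hxA hwx
      simpa [Function.mem_support, sub_ne_zero] using this.ne'
    have hApos : 0 < σ (A ∩ B) := by
      by_contra h
      push_neg at h
      have hAB0 : σ (A ∩ B) = 0 := le_antisymm h zero_le
      have : σ A ≤ σ (A ∩ B) + σ Bᶜ := by
        refine le_trans (measure_mono ?_) (measure_union_le _ _)
        intro x hx
        by_cases hxB : x ∈ B
        · exact Or.inl ⟨hx, hxB⟩
        · exact Or.inr hxB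
      rw [hAB0, hBc, add_zero] at this
      exact hstrict (le_antisymm this zero_le)
    exact lt_of_lt_of_le hApos (measure_mono hsub)
  have hlt : (∫ x, f x ∂σ) < ∫ x, g x ∂σ := by
    have := (MeasureTheory.integral_pos_iff_support_of_nonneg_ae hnn hint).2 hsupp
    have hsub : (∫ x, g x - f x ∂σ) = (∫ x, g x ∂σ) - ∫ x, f x ∂σ :=
      integral_sub hintu hintv
    linarith [hsub ▸ this]
  rw [hjumpu, hjumpv]
  linarith
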